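/- Suppose I'(0) − I(0)·φ'(0) > 1. Then there exists b* ∈ (0, b̂] such that I(b*) − I'(b*)·φ(b*)/φ'(b*) = ψ(b*)/ψ'(b*) − φ(b*)/φ'(b*). -/

import Mathlib

lemma aux_hasDerivAt (k l m P Q : ℝ) (x : ℝ) :
    HasDerivAt (fun y : ℝ => m * Real.exp (k*y) * (P * Real.sinh (l*y) + Q * Real.cosh (l*y)))
      (m * Real.exp (k*x) * ((k*P + l*Q) * Real.sinh (l*x) + (k*Q + l*P) * Real.cosh (l*x))) x := by
  have h1 : HasDerivAt (fun y:ℝ => k*y) k x := by simpa using (hasDerivAt_id x).const_mul k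
  have h2 : HasDerivAt (fun y:ℝ => l*y) l x := by simpa using (hasDerivAt_id x).const_mul l
  have hA : HasDerivAt (fun y:ℝ => m * Real.exp (k*y)) (m * (Real.exp (k*x) * k)) x :=
    h1.exp.const_mul m
  have hB : HasDerivAt (fun y:ℝ => P * Real.sinh (l*y) + Q * Real.cosh (l*y))
      (P * (Real.cosh (l*x) * l) + Q * (Real.sinh (l*x) * l)) x :=
    (h2.sinh.const_mul P).add (h2.cosh.const_mul Q)
  have : HasDerivAt (fun y => m * Real.exp (k*y) * (P * Real.sinh (l*y) + Q * Real.cosh (l*y))) _ x := hA.mul hB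
  convert this using 1
  ring

lemma psi_facts (μ σ q Δ : ℝ) (hμ : 0 < μ) (hσ : 0 < σ) (hq : 0 < q)
    (hΔ : Δ = Real.sqrt (μ ^ 2 + 2 * q * σ ^ 2))
    (ψ : ℝ → ℝ)
    (hψ : ∀ x : ℝ, ψ x =
      σ ^ 2 / Δ * Real.exp (-(μ / σ ^ 2) * x) * Real.sinh (Δ * x / σ ^ 2))
    (bhat : ℝ) (hbhat_pos : 0 < bhat) (hbhat : deriv (deriv ψ) bhat = 0) :
    ψ 0 = 0 ∧ Continuous ψ ∧ Continuous (deriv ψ) ∧ (∀ x : ℝ, 0 ≤ x → 0 < deriv ψ x) ∧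
      ψ bhat / deriv ψ bhat = μ / q := by
  have hσ2 : (0:ℝ) < σ ^ 2 := by positivity
  have harg : (0:ℝ) < μ ^ 2 + 2 * q * σ ^ 2 := by positivity
  have hΔpos : 0 < Δ := hΔ ▸ Real.sqrt_pos.mpr harg
  have hΔsq : Δ ^ 2 = μ ^ 2 + 2 * q * σ ^ 2 := by
    rw [hΔ, Real.sq_sqrt harg.le]
  set a : ℝ := -(μ / σ ^ 2) with ha
  set bb : ℝ := Δ / σ ^ 2 with hbb
  set C : ℝ := σ ^ 2 / Δ with hC
  have hCpos : 0 < C := by rw [hC]; positivity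
  have ha_neg : a < 0 := by
    rw [ha]
    have : 0 < μ / σ ^ 2 := by positivity
    linarith
  have hbb_pos : 0 < bb := by rw [hbb]; positivity
  have hab : 0 < a + bb := by
    have hμΔ : μ < Δ := by nlinarith [hΔsq, hσ2, hμ, hΔpos, hq]
    have h2 : a + bb = (Δ - μ) / σ ^ 2 := by rw [ha, hbb]; ring
    rw [h2]
    exact div_pos (by linarith) hσ2
  have hψeq : ψ = fun x => C * Real.exp (a*x) * (1 * Real.sinh (bb*x) + 0 * Real.cosh (bb*x)) := by
    funext x
    rw [hψ, show Δ * x / σ ^ 2 = bb * x by rw [hbb]; ring]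
    ring
  have hdψ : ∀ x, HasDerivAt ψ
      (C * Real.exp (a*x) * ((a*1 + bb*0) * Real.sinh (bb*x) + (a*0 + bb*1) * Real.cosh (bb*x))) x := by
    intro x
    rw [hψeq]
    exact aux_hasDerivAt a bb C 1 0 x
  have hderivψ : deriv ψ = fun x =>
      C * Real.exp (a*x) * ((a*1 + bb*0) * Real.sinh (bb*x) + (a*0 + bb*1) * Real.cosh (bb*x)) :=
    funext fun x => (hdψ x).deriv
  have hdψ2 : ∀ x, HasDerivAt (deriv ψ)
      (C * Real.exp (a*x) * ((a*(a*1+bb*0) + bb*(a*0+bb*1)) * Real.sinh (bb*x)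
        + (a*(a*0+bb*1) + bb*(a*1+bb*0)) * Real.cosh (bb*x))) x := by
    intro x
    rw [hderivψ]
    exact aux_hasDerivAt a bb C (a*1+bb*0) (a*0+bb*1) x
  have hderivψ2 : deriv (deriv ψ) = fun x =>
      C * Real.exp (a*x) * ((a*(a*1+bb*0) + bb*(a*0+bb*1)) * Real.sinh (bb*x)
        + (a*(a*0+bb*1) + bb*(a*1+bb*0)) * Real.cosh (bb*x)) :=
    funext fun x => (hdψ2 x).deriv
  have hψ'pos : ∀ x : ℝ, 0 ≤ x → 0 < deriv ψ x := by
    intro x hx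
    rw [hderivψ]
    have hs : 0 ≤ Real.sinh (bb*x) := Real.sinh_nonneg_iff.mpr (by positivity)
    have hsc : Real.sinh (bb*x) < Real.cosh (bb*x) := by
      nlinarith [Real.cosh_sub_sinh (bb*x), Real.exp_pos (-(bb*x))]
    have hc : 0 < Real.cosh (bb*x) := Real.cosh_pos _
    have h1 : a * Real.cosh (bb*x) ≤ a * Real.sinh (bb*x) :=
      mul_le_mul_of_nonpos_left hsc.le ha_neg.le
    have h2 : 0 < (a + bb) * Real.cosh (bb*x) := mul_pos hab hc
    have hin : 0 < (a*1 + bb*0) * Real.sinh (bb*x) + (a*0 + bb*1) * Real.cosh (bb*x) := by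
      nlinarith [h1, h2]
    exact mul_pos (mul_pos hCpos (Real.exp_pos _)) hin
  have hψ0 : ψ 0 = 0 := by rw [hψeq]; simp
  have hcψ : Continuous ψ := by rw [hψeq]; fun_prop
  have hcψ' : Continuous (deriv ψ) := by rw [hderivψ]; fun_prop
  have hE : (a*(a*1+bb*0) + bb*(a*0+bb*1)) * Real.sinh (bb*bhat)
      + (a*(a*0+bb*1) + bb*(a*1+bb*0)) * Real.cosh (bb*bhat) = 0 := by
    have h0 := hbhat
    rw [hderivψ2] at h0
    have hCe : C * Real.exp (a*bhat) ≠ 0 :=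
      (mul_pos hCpos (Real.exp_pos _)).ne'
    exact (mul_eq_zero.mp h0).resolve_left hCe
  have hσne : σ ^ 2 ≠ 0 := hσ2.ne'
  have h1' : (bb^2 - a^2) * σ^2 = 2*q := by
    rw [ha, hbb]
    field_simp
    linear_combination hΔsq
  have h2' : a * σ^2 + μ = 0 := by
    rw [ha]
    field_simp
    ring
  have hne : (0:ℝ) < (-2)*a*σ^2 := by
    have he : (-2)*a*σ^2 = 2*(-a)*σ^2 := by ring
    rw [he]
    exact mul_pos (mul_pos two_pos (neg_pos.2 ha_neg)) hσ2
  have hψbv : ψ bhat = C * Real.exp (a*bhat)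
      * (1 * Real.sinh (bb*bhat) + 0 * Real.cosh (bb*bhat)) := by rw [hψeq]
  have H : ((-2)*a*σ^2) * (μ * deriv ψ bhat) = ((-2)*a*σ^2) * (q * ψ bhat) := by
    rw [(hdψ bhat).deriv, hψbv]
    linear_combination (μ*C*Real.exp (a*bhat)*Real.sinh (bb*bhat)) * h1'
      + (-(μ*C*Real.exp (a*bhat)*σ^2)) * hE
      + (2*q*C*Real.exp (a*bhat)*Real.sinh (bb*bhat)) * h2'
  have hkey : μ * deriv ψ bhat = q * ψ bhat := mul_left_cancel₀ hne.ne' H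
  have hψ'bhat : 0 < deriv ψ bhat := hψ'pos bhat hbhat_pos.le
  have hratio : ψ bhat / deriv ψ bhat = μ / q := by
    rw [div_eq_div_iff hψ'bhat.ne' hq.ne']
    linarith [hkey]
  exact ⟨hψ0, hcψ, hcψ', hψ'pos, hratio⟩



lemma star_ineq (μ σ q Fv Iv I1 I2 pv p2 φv : ℝ) (hq : 0 < q) (hσ2 : 0 < σ ^ 2)
    (hp : pv < 0)
    (hIe : σ ^ 2 / 2 * I2 + (μ - Fv) * I1 - q * Iv = -Fv)
    (hφe : σ ^ 2 / 2 * p2 + (μ - Fv) * pv - q * φv = 0)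
    (hI1 : I1 ≤ 1) (hI2 : I2 ≤ 0) (hp2 : 0 < p2) :
    Iv + (1 - I1) * (φv / pv) ≤ μ / q := by
  have expand : q * Iv * pv + q * (1 - I1) * φv - μ * pv
      = σ ^ 2 / 2 * (pv * I2 + (1 - I1) * p2) := by
    linear_combination (-pv) * hIe + (-(1 - I1)) * hφe
  have h1 : 0 ≤ pv * I2 := by
    have h := mul_nonneg (neg_nonneg.2 hp.le) (neg_nonneg.2 hI2)
    rwa [neg_mul_neg] at h
  have h2 : 0 ≤ (1 - I1) * p2 := mul_nonneg (by linarith) hp2.le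
  have hrhs : 0 ≤ σ ^ 2 / 2 * (pv * I2 + (1 - I1) * p2) :=
    mul_nonneg (by positivity) (by linarith)
  have hmul : μ * pv ≤ q * Iv * pv + q * (1 - I1) * φv := by linarith
  have hrepr : μ / q - (Iv + (1 - I1) * (φv / pv))
      = (μ * pv - (q * Iv * pv + q * (1 - I1) * φv)) / (q * pv) := by
    have hpne : pv ≠ 0 := hp.ne
    have hqne : q ≠ 0 := hq.ne'
    field_simp
  have hden : q * pv ≤ 0 := (mul_neg_of_pos_of_neg hq hp).le
  have hnn := div_nonneg_of_nonpos (by linarith :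
    μ * pv - (q * Iv * pv + q * (1 - I1) * φv) ≤ 0) hden
  rw [← hrepr] at hnn
  linarith

lemma f0_pos (Iv I1 p0 : ℝ) (hp0 : p0 < 0) (hcond : 1 < I1 - Iv * p0) :
    0 < Iv + (1 - I1) * (1 / p0) := by
  have hnum : Iv * p0 + (1 - I1) < 0 := by linarith
  have heq : Iv + (1 - I1) * (1 / p0) = (Iv * p0 + (1 - I1)) / p0 := by
    have hpne : p0 ≠ 0 := hp0.ne
    field_simp
  rw [heq]
  exact div_pos_of_neg_of_neg hnum hp0

theorem stmt_11 (μ σ q : ℝ) (hμ : 0 < μ) (hσ : 0 < σ) (hq : 0 < q)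
    (Δ : ℝ) (hΔ : Δ = Real.sqrt (μ ^ 2 + 2 * q * σ ^ 2))
    (ψ : ℝ → ℝ)
    (hψ : ∀ x : ℝ, ψ x =
      σ ^ 2 / Δ * Real.exp (-(μ / σ ^ 2) * x) * Real.sinh (Δ * x / σ ^ 2))
    (bhat : ℝ) (hbhat_pos : 0 < bhat) (hbhat : deriv (deriv ψ) bhat = 0)
    (hbhat_uniq : ∀ b > (0:ℝ), deriv (deriv ψ) b = 0 → b = bhat)
    (F φ I : ℝ → ℝ)
    (hφC : ContDiff ℝ 2 φ) (hφ0 : φ 0 = 1)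
    (hφ' : ∀ x ≥ (0:ℝ), deriv φ x < 0)
    (hφ'' : ∀ x ≥ (0:ℝ), 0 < deriv (deriv φ) x)
    (hφODE : ∀ x > (0:ℝ),
      σ ^ 2 / 2 * deriv (deriv φ) x + (μ - F x) * deriv φ x - q * φ x = 0)
    (hIC : ContDiff ℝ 2 I)
    (hIconc : ∀ x ≥ (0:ℝ), deriv (deriv I) x ≤ 0)
    (hI' : ∀ x ≥ (0:ℝ), 0 ≤ deriv I x ∧ deriv I x ≤ 1)
    (hIODE : ∀ x > (0:ℝ),
      σ ^ 2 / 2 * deriv (deriv I) x + (μ - F x) * deriv I x - q * I x = -F x)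
    (hcond : 1 < deriv I 0 - I 0 * deriv φ 0) :
    ∃ b : ℝ, 0 < b ∧ b ≤ bhat ∧
      I b - deriv I b * φ b / deriv φ b = ψ b / deriv ψ b - φ b / deriv φ b := by
  obtain ⟨hψ0, hcψ, hcψ', hψ'pos, hratio⟩ :=
    psi_facts μ σ q Δ hμ hσ hq hΔ ψ hψ bhat hbhat_pos hbhat
  have hσ2 : (0:ℝ) < σ ^ 2 := by positivity
  have hstar : I bhat + (1 - deriv I bhat) * (φ bhat / deriv φ bhat) ≤ μ / q :=
    star_ineq μ σ q (F bhat) (I bhat) (deriv I bhat) (deriv (deriv I) bhat)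
      (deriv φ bhat) (deriv (deriv φ) bhat) (φ bhat) hq hσ2
      (hφ' bhat hbhat_pos.le) (hIODE bhat hbhat_pos) (hφODE bhat hbhat_pos)
      (hI' bhat hbhat_pos.le).2 (hIconc bhat hbhat_pos.le) (hφ'' bhat hbhat_pos.le)
  set f : ℝ → ℝ := fun x => I x + (1 - deriv I x) * (φ x / deriv φ x) - ψ x / deriv ψ x with hf
  have hfbh : f bhat ≤ 0 := by
    simp only [hf]
    linarith [hratio, hstar]
  have hp0 : deriv φ 0 < 0 := hφ' 0 le_rfl
  have hf0 : 0 < f 0 := by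
    simp only [hf, hψ0, zero_div, sub_zero, hφ0]
    exact f0_pos (I 0) (deriv I 0) (deriv φ 0) hp0 hcond
  have hcI : Continuous I := hIC.continuous
  have hcI' : Continuous (deriv I) := hIC.continuous_deriv one_le_two
  have hcφ : Continuous φ := hφC.continuous
  have hcφ' : Continuous (deriv φ) := hφC.continuous_deriv one_le_two
  have hfc : ContinuousOn f (Set.Icc 0 bhat) := by
    rw [hf]
    apply ContinuousOn.sub
    · apply ContinuousOn.add hcI.continuousOn
      apply ContinuousOn.mul
      · exact (continuous_const.sub hcI').continuousOn
      · exact ContinuousOn.div hcφ.continuousOn hcφ'.continuousOn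
          fun x hx => (hφ' x hx.1).ne
    · exact ContinuousOn.div hcψ.continuousOn hcψ'.continuousOn
        fun x hx => (hψ'pos x hx.1).ne'
  have hmem : (0:ℝ) ∈ Set.Icc (f bhat) (f 0) := ⟨hfbh, hf0.le⟩
  obtain ⟨b, hbmem, hfb0⟩ := intermediate_value_Icc' hbhat_pos.le hfc hmem
  have hbne : b ≠ 0 := by
    intro h
    rw [h] at hfb0
    exact hf0.ne' hfb0
  refine ⟨b, lt_of_le_of_ne hbmem.1 (Ne.symm hbne), hbmem.2, ?_⟩
  simp only [hf] at hfb0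
  linear_combination hfb0
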